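/- With the same setup of a generalized Sasakian space form curvature tensor $R$ with constants $c_1, c_2, c_3$ on an inner product space with almost contact structure $(\phi, \xi, \eta)$: if $\{v_1,\dots,v_\ell\}$ is an orthonormal family whose span is orthogonal to $\xi$ (i.e. $\eta(v_i) = 0$ for all $i$), then $\sum_{i,j=1}^{\ell} R(v_i,v_j,v_j,v_i) = c_1 \ell(\ell-1) + 3c_2\|Q\|^2$, where $Qv_i$ denotes the orthogonal projection of $\phi v_i$ onto $\mathrm{span}\{v_1,\dots,v_\ell\}$ and $\|Q\|^2 = \sum_i \|Qv_i\|^2$. -/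

import Mathlib

open scoped InnerProductSpace

/-- For the generalized Sasakian space form curvature tensor with constants
`c₁, c₂, c₃` on an inner product space with almost contact structure `(φ, ξ, η)`,
and an orthonormal family `v₁,…,v_ℓ` orthogonal to `ξ`:
`∑_{i,j} R(vᵢ,vⱼ,vⱼ,vᵢ) = c₁ ℓ(ℓ-1) + 3c₂ ‖Q‖²`, where `Q vᵢ` is the
projection of `φ vᵢ` onto `span{v₁,…,v_ℓ}`. -/
theorem stmt_14 {V : Type*} [NormedAddCommGroup V] [InnerProductSpace ℝ V]
    [FiniteDimensional ℝ V]
    (c₁ c₂ c₃ : ℝ) (φ : V →ₗ[ℝ] V) (ξ : V) (hξ : ‖ξ‖ = 1)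
    (hphi2 : ∀ z, φ (φ z) = -z + ⟪z, ξ⟫_ℝ • ξ)
    (hcompat : ∀ z w, ⟪φ z, φ w⟫_ℝ = ⟪z, w⟫_ℝ - ⟪z, ξ⟫_ℝ * ⟪w, ξ⟫_ℝ)
    (ℓ : ℕ) (v : Fin ℓ → V) (hv : Orthonormal ℝ v)
    (hxi : ∀ i, ⟪v i, ξ⟫_ℝ = 0)
    (R : V → V → V → V → ℝ)
    (hR : ∀ Z1 Z2 Z3 Z4, R Z1 Z2 Z3 Z4 =
      c₁ * (⟪Z2, Z3⟫_ℝ * ⟪Z1, Z4⟫_ℝ - ⟪Z1, Z3⟫_ℝ * ⟪Z2, Z4⟫_ℝ)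
      + c₂ * (⟪Z1, φ Z3⟫_ℝ * ⟪φ Z2, Z4⟫_ℝ - ⟪Z2, φ Z3⟫_ℝ * ⟪φ Z1, Z4⟫_ℝ
          + 2 * ⟪Z1, φ Z2⟫_ℝ * ⟪φ Z3, Z4⟫_ℝ)
      + c₃ * (⟪Z1, ξ⟫_ℝ * ⟪Z3, ξ⟫_ℝ * ⟪Z2, Z4⟫_ℝ - ⟪Z2, ξ⟫_ℝ * ⟪Z3, ξ⟫_ℝ * ⟪Z1, Z4⟫_ℝ
          + ⟪Z1, Z3⟫_ℝ * ⟪Z2, ξ⟫_ℝ * ⟪Z4, ξ⟫_ℝ - ⟪Z2, Z3⟫_ℝ * ⟪Z1, ξ⟫_ℝ * ⟪Z4, ξ⟫_ℝ)) :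
    ∑ i : Fin ℓ, ∑ j : Fin ℓ, R (v i) (v j) (v j) (v i)
      = c₁ * ℓ * ((ℓ : ℝ) - 1)
        + 3 * c₂ * ∑ i : Fin ℓ,
            ‖(Submodule.orthogonalProjectionOnto (Submodule.span ℝ (Set.range v)) (φ (v i)) : V)‖ ^ 2
        := by
  have hξξ : ⟪ξ, ξ⟫_ℝ = 1 := by
    rw [real_inner_self_eq_norm_sq, hξ]; norm_num
  have hξ0 : ξ ≠ 0 := by
    intro h; rw [h, norm_zero] at hξ; norm_num at hξ
  have hφξ : φ ξ = 0 := by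
    have h : ⟪φ ξ, φ ξ⟫_ℝ = 0 := by rw [hcompat, hξξ]; ring
    exact inner_self_eq_zero.mp h
  have hηφ : ∀ z, ⟪φ z, ξ⟫_ℝ = 0 := by
    intro z
    have h1 : φ (φ (φ z)) = -(φ z) + ⟪φ z, ξ⟫_ℝ • ξ := hphi2 (φ z)
    have h2 : φ (φ (φ z)) = -(φ z) := by
      rw [hphi2 z, map_add, map_neg, map_smul, hφξ, smul_zero, add_zero]
    rw [h2] at h1
    have h3 : ⟪φ z, ξ⟫_ℝ • ξ = 0 := by
      have := h1.symm
      rwa [add_eq_left] at this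
    rcases smul_eq_zero.mp h3 with h | h
    · exact h
    · exact absurd h hξ0
  have hskew : ∀ z w, ⟪φ z, w⟫_ℝ = -⟪z, φ w⟫_ℝ := by
    intro z w
    have h1 : ⟪φ (φ z), φ w⟫_ℝ = ⟪φ z, w⟫_ℝ - ⟪φ z, ξ⟫_ℝ * ⟪w, ξ⟫_ℝ := hcompat (φ z) w
    rw [hηφ z, zero_mul, sub_zero] at h1
    have hwz : ⟪ξ, φ w⟫_ℝ = 0 := by rw [real_inner_comm]; exact hηφ w
    rw [← h1, hphi2 z, inner_add_left, inner_neg_left, real_inner_smul_left, hwz]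
    ring
  -- inner products of orthonormal family
  have hvv : ∀ i j, ⟪v i, v j⟫_ℝ = if i = j then 1 else 0 := by
    intro i j
    rcases eq_or_ne i j with h | h
    · subst h
      rw [real_inner_self_eq_norm_sq, hv.1 i]
      norm_num
    · rw [if_neg h]
      exact hv.2 h
  -- projection formula
  set K := Submodule.span ℝ (Set.range v) with hK
  have hsum_inner : ∀ (x : V) (k : Fin ℓ),
      ⟪∑ i, ⟪x, v i⟫_ℝ • v i, v k⟫_ℝ = ⟪x, v k⟫_ℝ := by
    intro x k
    rw [sum_inner]
    have h : ∀ i ∈ Finset.univ, ⟪⟪x, v i⟫_ℝ • v i, v k⟫_ℝ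
        = if i = k then ⟪x, v k⟫_ℝ else 0 := by
      intro i _
      rw [real_inner_smul_left, hvv]
      split <;> simp_all
    rw [Finset.sum_congr rfl h, Finset.sum_ite_eq' Finset.univ k]
    simp
  have hproj : ∀ x : V, (Submodule.orthogonalProjectionOnto K x : V) = ∑ i, ⟪x, v i⟫_ℝ • v i := by
    intro x
    rw [← Submodule.starProjection_apply]
    apply Submodule.eq_starProjection_of_mem_of_inner_eq_zero
    · exact Submodule.sum_mem _ fun i _ => Submodule.smul_mem _ _
        (Submodule.subset_span (Set.mem_range_self i))
    · intro w hw
      have hw' : w ∈ Submodule.span ℝ (Set.range v) := hw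
      rw [Submodule.mem_span_range_iff_exists_fun ℝ] at hw'
      obtain ⟨c, rfl⟩ := hw'
      rw [inner_sum]
      refine Finset.sum_eq_zero fun k _ => ?_
      rw [real_inner_smul_right, inner_sub_left, hsum_inner]
      ring
  have hnorm : ∀ x : V, ‖(Submodule.orthogonalProjectionOnto K x : V)‖ ^ 2 = ∑ i, ⟪x, v i⟫_ℝ ^ 2 := by
    intro x
    rw [hproj, ← real_inner_self_eq_norm_sq, inner_sum]
    refine Finset.sum_congr rfl fun k _ => ?_
    rw [real_inner_smul_right, hsum_inner]
    ring
  have hφvv : ∀ j, ⟪v j, φ (v j)⟫_ℝ = 0 := by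
    intro j
    linarith [hskew (v j) (v j), real_inner_comm (φ (v j)) (v j)]
  have hterm : ∀ i j, R (v i) (v j) (v j) (v i)
      = c₁ * (1 - (if i = j then (1:ℝ) else 0)) + 3 * c₂ * ⟪v i, φ (v j)⟫_ℝ ^ 2 := by
    intro i j
    rw [hR]
    rw [hxi, hxi, hφvv j, real_inner_comm (φ (v j)) (v i)]
    rcases eq_or_ne i j with h | h
    · subst h
      rw [hvv i i, if_pos rfl]
      ring
    · rw [hvv i j, hvv j i, hvv i i, hvv j j, if_neg h, if_neg (Ne.symm h),
        if_pos rfl, if_pos rfl]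
      ring
  have h1 : ∀ i : Fin ℓ, ∑ j : Fin ℓ, (c₁ * (1 - (if i = j then (1:ℝ) else 0)))
      = c₁ * ℓ - c₁ := by
    intro i
    have h : ∀ j ∈ Finset.univ, (c₁ * (1 - (if i = j then (1:ℝ) else 0)))
        = c₁ - (if i = j then c₁ else 0) := by
      intro j _; split <;> ring
    rw [Finset.sum_congr rfl h, Finset.sum_sub_distrib, Finset.sum_const,
      Finset.sum_ite_eq Finset.univ i, if_pos (Finset.mem_univ i),
      Finset.card_univ, Fintype.card_fin, nsmul_eq_mul]
    ring
  have hsum1 : ∑ i : Fin ℓ, ∑ j : Fin ℓ, (c₁ * (1 - (if i = j then (1:ℝ) else 0)))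
      = c₁ * ℓ * ((ℓ : ℝ) - 1) := by
    rw [Finset.sum_congr rfl fun i _ => h1 i, Finset.sum_const,
      Finset.card_univ, Fintype.card_fin, nsmul_eq_mul]
    ring
  calc ∑ i : Fin ℓ, ∑ j : Fin ℓ, R (v i) (v j) (v j) (v i)
      = ∑ i : Fin ℓ, ∑ j : Fin ℓ, ((c₁ * (1 - (if i = j then (1:ℝ) else 0)))
          + 3 * c₂ * ⟪v i, φ (v j)⟫_ℝ ^ 2) := by
        refine Finset.sum_congr rfl fun i _ => Finset.sum_congr rfl fun j _ => hterm i j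
    _ = (∑ i : Fin ℓ, ∑ j : Fin ℓ, (c₁ * (1 - (if i = j then (1:ℝ) else 0))))
          + ∑ i : Fin ℓ, ∑ j : Fin ℓ, 3 * c₂ * ⟪v i, φ (v j)⟫_ℝ ^ 2 := by
        rw [← Finset.sum_add_distrib]
        exact Finset.sum_congr rfl fun i _ => Finset.sum_add_distrib
    _ = c₁ * ℓ * ((ℓ : ℝ) - 1)
          + 3 * c₂ * ∑ i : Fin ℓ,
            ‖(Submodule.orthogonalProjectionOnto K (φ (v i)) : V)‖ ^ 2 := by
        rw [hsum1]
        congr 1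
        rw [Finset.mul_sum, Finset.sum_comm]
        refine Finset.sum_congr rfl fun j _ => ?_
        rw [hnorm, Finset.mul_sum]
        refine Finset.sum_congr rfl fun i _ => ?_
        rw [real_inner_comm]
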